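/- arXiv:1402.5385 — 2 statements merged into one kernel-verified Lean document; each statement's English description precedes it below -/
import Mathlib

section
/- Let k be an algebraically closed field of characteristic zero and let V' be a 3-dimensional k-vector space. The image of the map μ : Hom(V', V) → S²(V'^*) × 𝔸¹ given (in matrix terms, identifying Hom(V', V) with 3×3 matrices) by Q ↦ (Qᵀ·Q, det(Q)) is exactly the set {(S, x) : S symmetric 3×3 matrix, det(S) = x²}. -/
open Matrix

lemma exists_transpose_mul_self {k : Type*} [Field k] [IsAlgClosed k] [CharZero k]
    (S : Matrix (Fin 3) (Fin 3) k) (hS : S.IsSymm) :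
    ∃ Q : Matrix (Fin 3) (Fin 3) k, Qᵀ * Q = S := by
  set B := Matrix.toBilin' S with hB
  have hBsymm : B.IsSymm := by
    rw [LinearMap.BilinForm.isSymm_def]
    intro x y
    simp only [hB, Matrix.toBilin'_apply']
    rw [Matrix.dotProduct_mulVec, ← Matrix.mulVec_transpose, hS.eq,
      dotProduct_comm]
  obtain ⟨v₀, hv₀⟩ := LinearMap.BilinForm.exists_orthogonal_basis (LinearMap.BilinForm.isSymm_iff.mp hBsymm)
  have hrank : Module.finrank k (Fin 3 → k) = 3 := by simp
  let v : Module.Basis (Fin 3) k (Fin 3 → k) := v₀.reindex (finCongr hrank)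
  have hv : ∀ i j : Fin 3, i ≠ j → B (v i) (v j) = 0 := by
    intro i j hij
    have hne : (finCongr hrank).symm i ≠ (finCongr hrank).symm j :=
      fun h => hij (by simpa using congrArg (finCongr hrank) h)
    simpa [v, Module.Basis.reindex_apply] using hv₀ hne
  let b : Module.Basis (Fin 3) k (Fin 3 → k) := Pi.basisFun k (Fin 3)
  let P : Matrix (Fin 3) (Fin 3) k := b.toMatrix v
  haveI : Invertible P := b.invertibleToMatrix v
  have hdet : IsUnit P.det := Matrix.isUnit_det_of_invertible P
  have hdetT : IsUnit Pᵀ.det := by rwa [Matrix.det_transpose]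
  have key : Pᵀ * S * P = LinearMap.BilinForm.toMatrix v B := by
    have h := LinearMap.BilinForm.toMatrix_mul_basis_toMatrix b v B
    rwa [show LinearMap.BilinForm.toMatrix b B = S by
      rw [LinearMap.BilinForm.toMatrix_basisFun, hB, LinearMap.BilinForm.toMatrix'_toBilin']] at h
  have hdiag : LinearMap.BilinForm.toMatrix v B
      = Matrix.diagonal (fun i => B (v i) (v i)) := by
    ext i j
    by_cases hij : i = j
    · subst hij; simp [LinearMap.BilinForm.toMatrix_apply]
    · simp [LinearMap.BilinForm.toMatrix_apply, Matrix.diagonal_apply_ne _ hij, hv i j hij]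
  choose c hc using fun i =>
    IsAlgClosed.exists_pow_nat_eq (k := k) (B (v i) (v i)) zero_lt_two
  have hEE : (Matrix.diagonal c)ᵀ * Matrix.diagonal c
      = Matrix.diagonal (fun i => B (v i) (v i)) := by
    rw [Matrix.diagonal_transpose, Matrix.diagonal_mul_diagonal]
    have hfun : (fun i => c i * c i) = fun i => B (v i) (v i) := by
      funext i; rw [← hc i]; ring
    rw [hfun]
  refine ⟨Matrix.diagonal c * P⁻¹, ?_⟩
  rw [Matrix.transpose_mul, Matrix.transpose_nonsing_inv]
  calc Pᵀ⁻¹ * (Matrix.diagonal c)ᵀ * (Matrix.diagonal c * P⁻¹)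
      = Pᵀ⁻¹ * ((Matrix.diagonal c)ᵀ * Matrix.diagonal c) * P⁻¹ := by
        simp only [Matrix.mul_assoc]
    _ = Pᵀ⁻¹ * (Pᵀ * S * P) * P⁻¹ := by rw [hEE, ← hdiag, ← key]
    _ = (Pᵀ⁻¹ * Pᵀ) * S * (P * P⁻¹) := by simp only [Matrix.mul_assoc]
    _ = S := by
        rw [Matrix.nonsing_inv_mul _ hdetT, Matrix.mul_nonsing_inv _ hdet,
          Matrix.one_mul, Matrix.mul_one]

/-- **Image of `Q ↦ (QᵀQ, det Q)`.**
Over an algebraically closed field of characteristic zero, the image of the map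
`μ : Q ↦ (Qᵀ·Q, det Q)` on `3×3` matrices is exactly
`{(S, x) : S symmetric, det S = x²}`. -/
theorem range_transposeMulSelf_det
    {k : Type*} [Field k] [IsAlgClosed k] [CharZero k] :
    Set.range (fun Q : Matrix (Fin 3) (Fin 3) k => (Qᵀ * Q, Q.det))
      = {p : Matrix (Fin 3) (Fin 3) k × k | p.1.IsSymm ∧ p.1.det = p.2 ^ 2} := by
  ext p
  constructor
  · rintro ⟨Q, rfl⟩
    refine ⟨?_, ?_⟩
    · simp [Matrix.IsSymm, Matrix.transpose_mul]
    · simp [Matrix.det_mul, Matrix.det_transpose, sq]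
  · rintro ⟨hsymm, hdet⟩
    obtain ⟨Q, hQ⟩ := exists_transpose_mul_self p.1 hsymm
    have hQdet : Q.det ^ 2 = p.2 ^ 2 := by
      rw [← hdet, ← hQ, Matrix.det_mul, Matrix.det_transpose, sq]
    have hcase : Q.det = p.2 ∨ Q.det = -p.2 := by
      have h0 : (Q.det - p.2) * (Q.det + p.2) = 0 := by linear_combination hQdet
      rcases mul_eq_zero.mp h0 with h | h
      · left; exact sub_eq_zero.mp h
      · right; exact eq_neg_of_add_eq_zero_left h
    rcases hcase with h | h
    · exact ⟨Q, Prod.ext hQ h⟩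
    · refine ⟨(Matrix.diagonal (fun i : Fin 3 => if i = 0 then (-1 : k) else 1)) * Q, ?_⟩
      set E : Matrix (Fin 3) (Fin 3) k :=
        Matrix.diagonal (fun i : Fin 3 => if i = 0 then (-1 : k) else 1) with hE
      have hd2 : Eᵀ * E = 1 := by
        rw [hE, Matrix.diagonal_transpose, Matrix.diagonal_mul_diagonal]
        have hfun : (fun i : Fin 3 =>
            (if i = 0 then (-1 : k) else 1) * (if i = 0 then (-1 : k) else 1))
            = fun _ => (1 : k) := by
          funext i; by_cases hi : i = 0 <;> simp [hi]
        rw [hfun, Matrix.diagonal_one]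
      have hdd : E.det = -1 := by
        rw [hE, Matrix.det_diagonal]; simp [Fin.prod_univ_three]
      refine Prod.ext ?_ ?_
      · show (E * Q)ᵀ * (E * Q) = p.1
        rw [Matrix.transpose_mul, Matrix.mul_assoc, ← Matrix.mul_assoc Eᵀ,
          hd2, Matrix.one_mul, hQ]
      · show (E * Q).det = p.2
        rw [Matrix.det_mul, hdd, h]; ring
end

section
/- In the polynomial ring k[t₁, …, t₁₂] over a field k, the ideal K generated by the six elements t₂t₃ − t₂t₅ − t₂t₈t₁₁, t₁t₃ − t₁t₅ − t₁t₈t₁₁, t₂t₆, t₁t₆, t₂t₄, t₁t₄ equals the intersection of the two ideals C₁ = (t₄, t₆, t₈t₁₁ − t₃ + t₅) and C₂ = (t₁, t₂). -/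
open MvPolynomial

private lemma mem_span_pair' {R : Type*} [CommRing R] {a b x : R} (u v : R)
    (h : x = u * a + v * b) : x ∈ Ideal.span {a, b} := by
  subst h
  exact add_mem (Ideal.mul_mem_left _ _ (Ideal.subset_span (by simp)))
    (Ideal.mul_mem_left _ _ (Ideal.subset_span (by simp)))

private lemma mem_span_triple' {R : Type*} [CommRing R] {a b c x : R} (u v w : R)
    (h : x = u * a + v * b + w * c) : x ∈ Ideal.span {a, b, c} := by
  subst h
  refine add_mem (add_mem ?_ ?_) ?_ <;>
    exact Ideal.mul_mem_left _ _ (Ideal.subset_span (by simp))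

private lemma mem_span_six' {R : Type*} [CommRing R] {a b c d e f x : R}
    (u₁ u₂ u₃ u₄ u₅ u₆ : R)
    (h : x = u₁ * a + u₂ * b + u₃ * c + u₄ * d + u₅ * e + u₆ * f) :
    x ∈ Ideal.span {a, b, c, d, e, f} := by
  subst h
  refine add_mem (add_mem (add_mem (add_mem (add_mem ?_ ?_) ?_) ?_) ?_) ?_ <;>
    exact Ideal.mul_mem_left _ _ (Ideal.subset_span (by simp))

/-- **Decomposition of the ideal `K` in `k[t₁,…,t₁₂]` for the `GL₃` example.**
The ideal `K` generated by
`t₂t₃ − t₂t₅ − t₂t₈t₁₁, t₁t₃ − t₁t₅ − t₁t₈t₁₁, t₂t₆, t₁t₆, t₂t₄, t₁t₄`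
equals the intersection of `C₁ = (t₄, t₆, t₈t₁₁ − t₃ + t₅)` and `C₂ = (t₁, t₂)`.
(Variables: `tᵢ = X (i-1)`.) -/
theorem ideal_decomposition_GL3
    {k : Type*} [Field k] :
    Ideal.span ({X 1 * X 2 - X 1 * X 4 - X 1 * X 7 * X 10,
                 X 0 * X 2 - X 0 * X 4 - X 0 * X 7 * X 10,
                 X 1 * X 5, X 0 * X 5,
                 X 1 * X 3, X 0 * X 3} : Set (MvPolynomial (Fin 12) k))
      = Ideal.span ({X 3, X 5, X 7 * X 10 - X 2 + X 4} : Set (MvPolynomial (Fin 12) k))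
        ⊓ Ideal.span ({X 0, X 1} : Set (MvPolynomial (Fin 12) k)) := by
  classical
  set K := Ideal.span ({X 1 * X 2 - X 1 * X 4 - X 1 * X 7 * X 10,
                 X 0 * X 2 - X 0 * X 4 - X 0 * X 7 * X 10,
                 X 1 * X 5, X 0 * X 5,
                 X 1 * X 3, X 0 * X 3} : Set (MvPolynomial (Fin 12) k)) with hK
  set C₁ := Ideal.span ({X 3, X 5, X 7 * X 10 - X 2 + X 4} : Set (MvPolynomial (Fin 12) k))
    with hC₁
  let σ : Fin 12 → MvPolynomial (Fin 12) k :=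
    fun i => if i = 2 then X 7 * X 10 + X 4 else if i = 3 then 0 else if i = 5 then 0 else X i
  have hσ2 : σ 2 = X 7 * X 10 + X 4 := if_pos rfl
  have hσ3 : σ 3 = 0 := by
    simp only [σ]; rw [if_neg (by decide)]; simp
  have hσ5 : σ 5 = 0 := by
    simp only [σ]; rw [if_neg (by decide), if_neg (by decide)]; simp
  have hσo : ∀ i : Fin 12, i ≠ 2 → i ≠ 3 → i ≠ 5 → σ i = X i := by
    intro i h2 h3 h5
    simp only [σ]; rw [if_neg h2, if_neg h3, if_neg h5]
  have hXσ : ∀ i, X i - σ i ∈ C₁ := by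
    intro i
    by_cases h2 : i = 2
    · subst h2; rw [hσ2]; exact mem_span_triple' 0 0 (-1) (by ring)
    by_cases h3 : i = 3
    · subst h3; rw [hσ3]; exact mem_span_triple' 1 0 0 (by ring)
    by_cases h5 : i = 5
    · subst h5; rw [hσ5]; exact mem_span_triple' 0 1 0 (by ring)
    · rw [hσo i h2 h3 h5, sub_self]; exact zero_mem _
  have keyA : ∀ p : MvPolynomial (Fin 12) k, p - aeval σ p ∈ C₁ := by
    intro p
    induction p using MvPolynomial.induction_on with
    | C a => simp only [aeval_C, algebraMap_eq, sub_self]; exact zero_mem _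
    | add p q hp hq =>
        have h : p + q - aeval σ (p + q) = (p - aeval σ p) + (q - aeval σ q) := by
          rw [map_add]; ring
        exact h ▸ add_mem hp hq
    | mul_X p i hp =>
        have h : p * X i - aeval σ (p * X i)
            = (p - aeval σ p) * X i + aeval σ p * (X i - σ i) := by
          rw [map_mul, aeval_X]; ring
        exact h ▸ add_mem (Ideal.mul_mem_right _ _ hp) (Ideal.mul_mem_left _ _ (hXσ i))
  have keyB : ∀ f ∈ C₁, aeval σ f = (0 : MvPolynomial (Fin 12) k) := by
    intro f hf
    have hle : C₁ ≤ RingHom.ker ((aeval σ : MvPolynomial (Fin 12) k →ₐ[k] _) :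
        MvPolynomial (Fin 12) k →+* MvPolynomial (Fin 12) k) := by
      rw [hC₁, Ideal.span_le]
      rintro p hp
      simp only [Set.mem_insert_iff, Set.mem_singleton_iff] at hp
      rcases hp with rfl | rfl | rfl
      · simp only [SetLike.mem_coe, RingHom.mem_ker, AlgHom.coe_toRingHom, aeval_X, hσ3]
      · simp only [SetLike.mem_coe, RingHom.mem_ker, AlgHom.coe_toRingHom, aeval_X, hσ5]
      · simp only [SetLike.mem_coe, RingHom.mem_ker, AlgHom.coe_toRingHom, map_sub, map_add,
          map_mul, aeval_X, hσ2, hσo 7 (by decide) (by decide) (by decide),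
          hσo 10 (by decide) (by decide) (by decide), hσo 4 (by decide) (by decide) (by decide)]
        ring
    exact hle hf
  have hmul : ∀ p ∈ C₁, p * X 0 ∈ K ∧ p * X 1 ∈ K := by
    intro p hp
    induction hp using Submodule.span_induction with
    | mem x hx =>
        simp only [Set.mem_insert_iff, Set.mem_singleton_iff] at hx
        rcases hx with rfl | rfl | rfl
        · exact ⟨mem_span_six' 0 0 0 0 0 1 (by ring), mem_span_six' 0 0 0 0 1 0 (by ring)⟩
        · exact ⟨mem_span_six' 0 0 0 1 0 0 (by ring), mem_span_six' 0 0 1 0 0 0 (by ring)⟩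
        · exact ⟨mem_span_six' 0 (-1) 0 0 0 0 (by ring), mem_span_six' (-1) 0 0 0 0 0 (by ring)⟩
    | zero => constructor <;> · rw [zero_mul]; exact zero_mem _
    | add x y hx hy ihx ihy =>
        exact ⟨by rw [add_mul]; exact add_mem ihx.1 ihy.1,
               by rw [add_mul]; exact add_mem ihx.2 ihy.2⟩
    | smul r x hx ih =>
        exact ⟨by rw [smul_eq_mul, mul_assoc]; exact Ideal.mul_mem_left _ _ ih.1,
               by rw [smul_eq_mul, mul_assoc]; exact Ideal.mul_mem_left _ _ ih.2⟩
  refine le_antisymm ?_ ?_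
  · rw [hK, Ideal.span_le]
    rintro p hp
    simp only [Set.mem_insert_iff, Set.mem_singleton_iff] at hp
    rcases hp with rfl | rfl | rfl | rfl | rfl | rfl <;> refine Ideal.mem_inf.mpr ⟨?_, ?_⟩
    · exact mem_span_triple' 0 0 (-(X 1)) (by ring)
    · exact mem_span_pair' 0 (X 2 - X 4 - X 7 * X 10) (by ring)
    · exact mem_span_triple' 0 0 (-(X 0)) (by ring)
    · exact mem_span_pair' (X 2 - X 4 - X 7 * X 10) 0 (by ring)
    · exact mem_span_triple' 0 (X 1) 0 (by ring)
    · exact mem_span_pair' 0 (X 5) (by ring)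
    · exact mem_span_triple' 0 (X 0) 0 (by ring)
    · exact mem_span_pair' (X 5) 0 (by ring)
    · exact mem_span_triple' (X 1) 0 0 (by ring)
    · exact mem_span_pair' 0 (X 3) (by ring)
    · exact mem_span_triple' (X 0) 0 0 (by ring)
    · exact mem_span_pair' (X 3) 0 (by ring)
  · intro f hf
    obtain ⟨hf1, hf2⟩ := Ideal.mem_inf.mp hf
    rw [Ideal.mem_span_pair] at hf2
    obtain ⟨a, b, hab⟩ := hf2
    have hψf : aeval σ f = 0 := keyB f hf1
    have h0 : aeval σ (X 0 : MvPolynomial (Fin 12) k) = X 0 := by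
      rw [aeval_X, hσo 0 (by decide) (by decide) (by decide)]
    have h1 : aeval σ (X 1 : MvPolynomial (Fin 12) k) = X 1 := by
      rw [aeval_X, hσo 1 (by decide) (by decide) (by decide)]
    have hab' : aeval σ a * X 0 + aeval σ b * X 1 = 0 := by
      have h := congrArg (aeval σ) hab
      rwa [map_add, map_mul, map_mul, h0, h1, hψf] at h
    have hrep : f = (a - aeval σ a) * X 0 + (b - aeval σ b) * X 1 := by
      linear_combination hab' - hab
    rw [hrep]
    exact add_mem (hmul _ (keyA a)).1 (hmul _ (keyA b)).2
end
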